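/- arXiv:2107.01720 — 8 statements merged into one kernel-verified Lean document; each statement's English description precedes it below -/
import Mathlib

section
/- For every positive integer n and real s > 0, the sum over k from 1 to n of (1/k)·Γ(n+1)Γ(n−k+2s)/(Γ(n−k+1)Γ(n+2s)) equals ψ(2s+n) − ψ(2s), where ψ is the digamma function. -/
open Finset

/-- The digamma function: logarithmic derivative of the Gamma function. -/
noncomputable def digamma (x : ℝ) : ℝ := deriv (fun y => Real.log (Real.Gamma y)) x

def auxNum (n k : ℕ) : ℝ := ∏ i ∈ Finset.range k, ((n : ℝ) - i)
def auxDen (a : ℝ) (n k : ℕ) : ℝ := ∏ i ∈ Finset.range k, (a + (n : ℝ) - 1 - i)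

lemma auxNum_succ (n k : ℕ) : auxNum n (k+1) = auxNum n k * ((n:ℝ) - k) :=
  Finset.prod_range_succ _ _

lemma auxDen_succ (a : ℝ) (n k : ℕ) : auxDen a n (k+1) = auxDen a n k * (a + (n:ℝ) - 1 - k) :=
  Finset.prod_range_succ _ _

lemma auxNum_shift (n k : ℕ) : auxNum (n+1) k * ((n:ℝ) + 1 - k) = auxNum n k * ((n:ℝ) + 1) := by
  induction k with
  | zero => simp [auxNum]
  | succ k ih =>
    rw [auxNum_succ, auxNum_succ]
    push_cast
    push_cast at ih
    linear_combination ((n:ℝ) - k) * ih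

lemma auxDen_shift (a : ℝ) (n k : ℕ) :
    auxDen a (n+1) k * (a + (n:ℝ) - k) = auxDen a n k * (a + (n:ℝ)) := by
  induction k with
  | zero => simp [auxDen]
  | succ k ih =>
    rw [auxDen_succ, auxDen_succ]
    push_cast
    push_cast at ih
    linear_combination (a + (n:ℝ) - 1 - k) * ih

lemma auxNum_pos (n k : ℕ) (h : k ≤ n) : 0 < auxNum n k := by
  apply Finset.prod_pos
  intro i hi
  simp only [Finset.mem_range] at hi
  have : (i:ℝ) < n := by exact_mod_cast lt_of_lt_of_le hi h
  linarith

lemma auxDen_pos (a : ℝ) (ha : 0 < a) (n k : ℕ) (h : k ≤ n) : 0 < auxDen a n k := by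
  apply Finset.prod_pos
  intro i hi
  simp only [Finset.mem_range] at hi
  have : (i:ℝ) + 1 ≤ n := by exact_mod_cast Nat.lt_of_lt_of_le hi h
  linarith

lemma prod_reflect_cast (c : ℝ) (k : ℕ) :
    (∏ j ∈ Finset.range k, (c - j)) = ∏ j ∈ Finset.range k, (c - (k:ℝ) + 1 + j) := by
  rw [← Finset.prod_range_reflect (fun j => c - (k:ℝ) + 1 + (j:ℕ)) k]
  apply Finset.prod_congr rfl
  intro j hj
  simp only [Finset.mem_range] at hj
  have h1 : ((k - 1 - j : ℕ) : ℝ) = (k:ℝ) - 1 - j := by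
    have h2 : j ≤ k - 1 := by omega
    have h3 : 1 ≤ k := by omega
    rw [Nat.cast_sub h2, Nat.cast_sub h3]
    norm_num
  rw [h1]
  ring

lemma Gamma_nat_shift (x : ℝ) (hx : 0 < x) (m : ℕ) :
    Real.Gamma (x + m) = Real.Gamma x * ∏ i ∈ Finset.range m, (x + i) := by
  induction m with
  | zero => simp
  | succ m ih =>
    have h1 : x + ((m:ℕ)+1 : ℕ) = (x + m) + 1 := by push_cast; ring
    have h2 : x + (m:ℝ) ≠ 0 := by positivity
    rw [h1, Real.Gamma_add_one h2, ih, Finset.prod_range_succ]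
    ring

lemma Gamma_eq_num (n k : ℕ) (h : k ≤ n) :
    Real.Gamma ((n:ℝ) + 1) = Real.Gamma ((n:ℝ) - k + 1) * auxNum n k := by
  have hk : (k:ℝ) ≤ n := by exact_mod_cast h
  have hx : 0 < (n:ℝ) - k + 1 := by linarith
  have h1 := Gamma_nat_shift ((n:ℝ) - k + 1) hx k
  have h2 : (n:ℝ) - k + 1 + k = (n:ℝ) + 1 := by ring
  rw [h2] at h1
  rw [h1, auxNum, prod_reflect_cast]

lemma Gamma_eq_den (a : ℝ) (ha : 0 < a) (n k : ℕ) (h : k ≤ n) :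
    Real.Gamma ((n:ℝ) + a) = Real.Gamma ((n:ℝ) - k + a) * auxDen a n k := by
  have hk : (k:ℝ) ≤ n := by exact_mod_cast h
  have hx : 0 < (n:ℝ) - k + a := by linarith
  have h1 := Gamma_nat_shift ((n:ℝ) - k + a) hx k
  have h2 : (n:ℝ) - k + a + k = (n:ℝ) + a := by ring
  rw [h2] at h1
  rw [h1, auxDen, prod_reflect_cast]
  congr 1
  apply Finset.prod_congr rfl
  intro j _
  ring

set_option maxHeartbeats 1000000 in
lemma boundary_calc (x a N D : ℝ) (ha : a ≠ 0) (hD : D ≠ 0) (h1 : x+1 ≠ 0) (h2 : x+2 ≠ 0)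
    (h3 : a+x ≠ 0) (h4 : a+x+1 ≠ 0) (h5 : x+1+a ≠ 0) :
    -(N / ((x+1) * D))
      + (N / D * ((x+1 - (x+1) - a) / ((x+2-(x+1)) * (x+1+a)))
         - (x+1)/(a+x) * ((1 - (x+1) - a)/((x+2-1)*(x+1+a))))
      + (N*(x+2)) / ((x+1) * (D*(a+x+1)/a))
      + (N*(x+2)) / ((x+1+1) * (D*(a+x+1)))
      = 1/(a+(x+1)) := by
  have e1 : x+1 - (x+1) - a = -a := by ring
  have e2 : x+2-(x+1) = 1 := by ring
  have e3 : x+2-1 = x+1 := by ring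
  have e4 : x+1+1 = x+2 := by ring
  have e5 : 1 - (x+1) - a = -(x+a) := by ring
  have e6 : a+(x+1) = x+1+a := by ring
  have e7 : (x+1) * (D*(a+x+1)/a) = ((x+1)*D*(a+x+1))/a := by ring
  rw [e1, e2, e3, e4, e5, e6, e7, div_div_eq_mul_div]
  field_simp
  ring

set_option maxHeartbeats 1000000 in
lemma main_sum (a : ℝ) (ha : 0 < a) (n : ℕ) :
    ∑ i ∈ Finset.range n, auxNum n (i+1) / (((i:ℝ)+1) * auxDen a n (i+1))
      = ∑ j ∈ Finset.range n, 1 / (a + j) := by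
  induction n with
  | zero => simp
  | succ n ih =>
    rcases Nat.eq_zero_or_pos n with rfl | hn
    · simp [auxNum, auxDen]
    · obtain ⟨m, rfl⟩ : ∃ m, n = m + 1 := ⟨n - 1, by omega⟩
      show (∑ i ∈ Finset.range (m+2), auxNum (m+2) (i+1) / (((i:ℝ)+1) * auxDen a (m+2) (i+1)))
          = ∑ j ∈ Finset.range (m+2), 1 / (a + (j:ℝ))
      set W : ℕ → ℝ := fun k =>
        auxNum (m+1) k / auxDen a (m+1) k *
          (((k:ℝ) - (m+1) - a) / (((m:ℝ) + 2 - k) * ((m:ℝ) + 1 + a))) with hW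
      have hma : (0:ℝ) < (m:ℝ) + 1 + a := by positivity
      -- pointwise identity for k = i+1, i < m
      have key : ∀ i < m,
          auxNum (m+2) (i+1) / (((i:ℝ)+1) * auxDen a (m+2) (i+1))
            = auxNum (m+1) (i+1) / (((i:ℝ)+1) * auxDen a (m+1) (i+1))
              + (W (i+1+1) - W (i+1)) := by
        intro i hi
        have hk1 : i + 1 ≤ m + 1 := by omega
        have hi' : (i:ℝ) + 1 ≤ m := by exact_mod_cast hi
        have hD : 0 < auxDen a (m+1) (i+1) := auxDen_pos a ha _ _ hk1
        have e1 : auxNum (m+2) (i+1) = auxNum (m+1) (i+1) * ((m:ℝ)+2) / ((m:ℝ)+1-i) := by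
          rw [eq_div_iff (by linarith : (m:ℝ)+1-(i:ℝ) ≠ 0)]
          have := auxNum_shift (m+1) (i+1)
          push_cast at this ⊢
          linarith [this]
        have e2 : auxDen a (m+2) (i+1) = auxDen a (m+1) (i+1) * (a+(m:ℝ)+1) / (a+(m:ℝ)-i) := by
          rw [eq_div_iff (by linarith : a+(m:ℝ)-(i:ℝ) ≠ 0)]
          have := auxDen_shift a (m+1) (i+1)
          push_cast at this ⊢
          linarith [this]
        have e3 : auxNum (m+1) (i+1+1) = auxNum (m+1) (i+1) * ((m:ℝ) - i) := by
          have := auxNum_succ (m+1) (i+1); push_cast at this ⊢; linarith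
        have e4 : auxDen a (m+1) (i+1+1) = auxDen a (m+1) (i+1) * (a + (m:ℝ) - 1 - i) := by
          have := auxDen_succ a (m+1) (i+1); push_cast at this ⊢; linarith
        rw [hW]
        simp only []
        rw [e1, e2, e3, e4]
        push_cast
        have n1 : (i:ℝ) + 1 ≠ 0 := by positivity
        have n2 : (m:ℝ) + 1 - i ≠ 0 := by linarith
        have n3 : a + (m:ℝ) - i ≠ 0 := by linarith
        have n4 : a + (m:ℝ) + 1 ≠ 0 := by linarith
        have n5 : a + (m:ℝ) - 1 - i ≠ 0 := by linarith
        have n6 : (m:ℝ) - i ≠ 0 := by linarith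
        have n7 : (m:ℝ) + 2 - ((i:ℝ)+1+1) ≠ 0 := by linarith
        have n8 : (m:ℝ) + 2 - ((i:ℝ)+1) ≠ 0 := by linarith
        have n9 : auxDen a (m+1) (i+1) ≠ 0 := ne_of_gt hD
        field_simp
        ring
      -- boundary values
      have hDm : 0 < auxDen a (m+1) (m+1) := auxDen_pos a ha _ _ le_rfl
      have hsA : auxNum (m+2) (m+1) = auxNum (m+1) (m+1) * ((m:ℝ)+2) := by
        have := auxNum_shift (m+1) (m+1); push_cast at this ⊢; linarith
      have hsB : auxDen a (m+2) (m+1) = auxDen a (m+1) (m+1) * (a+(m:ℝ)+1) / a := by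
        rw [eq_div_iff (ne_of_gt ha)]
        have := auxDen_shift a (m+1) (m+1); push_cast at this ⊢; linarith
      have hsC : auxNum (m+2) (m+1+1) = auxNum (m+1) (m+1) * ((m:ℝ)+2) := by
        have := auxNum_succ (m+2) (m+1); push_cast at this ⊢; rw [this, hsA]; ring
      have hsD : auxDen a (m+2) (m+1+1) = auxDen a (m+1) (m+1) * (a+(m:ℝ)+1) := by
        have := auxDen_succ a (m+2) (m+1); push_cast at this ⊢
        rw [show a + ((m:ℝ) + 2) - 1 - ((m:ℝ)+1) = a by ring] at this
        rw [this, hsB]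
        field_simp
      have h1 : auxNum (m+1) 1 = (m:ℝ)+1 := by simp [auxNum]
      have h2 : auxDen a (m+1) 1 = a + (m:ℝ) := by simp [auxDen]; push_cast; ring
      have boundary :
          - (auxNum (m+1) (m+1) / (((m:ℝ)+1) * auxDen a (m+1) (m+1)))
            + (W (m+1) - W 1)
            + auxNum (m+2) (m+1) / (((m:ℝ)+1) * auxDen a (m+2) (m+1))
            + auxNum (m+2) (m+1+1) / ((((m+1:ℕ):ℝ)+1) * auxDen a (m+2) (m+1+1))
          = 1 / (a + ((m:ℝ)+1)) := by
        rw [hW]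
        simp only []
        rw [hsA, hsB, hsC, hsD, h1, h2]
        push_cast
        exact boundary_calc (m:ℝ) a _ _ (ne_of_gt ha) (ne_of_gt hDm)
          (by positivity) (by positivity) (by positivity) (by positivity) (by positivity)
      -- assemble
      have S1 : (∑ i ∈ Finset.range (m+2),
            auxNum (m+2) (i+1) / (((i:ℝ)+1) * auxDen a (m+2) (i+1)))
          = (∑ i ∈ Finset.range (m+1),
              auxNum (m+2) (i+1) / (((i:ℝ)+1) * auxDen a (m+2) (i+1)))
            + auxNum (m+2) (m+1+1) / ((((m+1:ℕ):ℝ)+1) * auxDen a (m+2) (m+1+1)) :=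
        Finset.sum_range_succ _ (m+1)
      have S2 : (∑ i ∈ Finset.range (m+1),
            auxNum (m+2) (i+1) / (((i:ℝ)+1) * auxDen a (m+2) (i+1)))
          = (∑ i ∈ Finset.range m,
              auxNum (m+2) (i+1) / (((i:ℝ)+1) * auxDen a (m+2) (i+1)))
            + auxNum (m+2) (m+1) / (((m:ℝ)+1) * auxDen a (m+2) (m+1)) :=
        Finset.sum_range_succ _ m
      have S5 : (∑ i ∈ Finset.range (m+1),
            auxNum (m+1) (i+1) / (((i:ℝ)+1) * auxDen a (m+1) (i+1)))
          = (∑ i ∈ Finset.range m,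
              auxNum (m+1) (i+1) / (((i:ℝ)+1) * auxDen a (m+1) (i+1)))
            + auxNum (m+1) (m+1) / (((m:ℝ)+1) * auxDen a (m+1) (m+1)) :=
        Finset.sum_range_succ _ m
      have S6 : (∑ j ∈ Finset.range (m+2), 1 / (a + (j:ℝ)))
          = (∑ j ∈ Finset.range (m+1), 1 / (a + (j:ℝ))) + 1 / (a + (((m+1:ℕ)):ℝ)) :=
        Finset.sum_range_succ _ (m+1)
      push_cast at S6
      have S3 : (∑ i ∈ Finset.range m,
            auxNum (m+2) (i+1) / (((i:ℝ)+1) * auxDen a (m+2) (i+1)))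
          = ∑ i ∈ Finset.range m,
            (auxNum (m+1) (i+1) / (((i:ℝ)+1) * auxDen a (m+1) (i+1)) + (W (i+1+1) - W (i+1))) :=
        Finset.sum_congr rfl (fun i hi => key i (Finset.mem_range.mp hi))
      have T : (∑ i ∈ Finset.range m, (W (i+1+1) - W (i+1))) = W (m+1) - W 1 :=
        Finset.sum_range_sub (fun i => W (i+1)) m
      have S4 : (∑ i ∈ Finset.range m,
            (auxNum (m+1) (i+1) / (((i:ℝ)+1) * auxDen a (m+1) (i+1)) + (W (i+1+1) - W (i+1))))
          = (∑ i ∈ Finset.range m,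
              auxNum (m+1) (i+1) / (((i:ℝ)+1) * auxDen a (m+1) (i+1)))
            + (W (m+1) - W 1) := by
        rw [Finset.sum_add_distrib, T]
      rw [S1, S2, S3, S4, S6]
      linarith [S5, ih, boundary]

lemma logGamma_diffAt (x : ℝ) (hx : 0 < x) :
    DifferentiableAt ℝ (fun y => Real.log (Real.Gamma y)) x := by
  have h1 : DifferentiableAt ℝ Real.Gamma x :=
    Real.differentiableAt_Gamma (fun m => by
      have h2 : (0:ℝ) ≤ m := Nat.cast_nonneg m
      intro h; rw [h] at hx; linarith)
  exact h1.log (Real.Gamma_pos_of_pos hx).ne'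

lemma digamma_add_one (x : ℝ) (hx : 0 < x) : digamma (x + 1) = digamma x + 1 / x := by
  have heq : (fun y => Real.log (Real.Gamma y)) =ᶠ[nhds (x+1)]
      (fun y => Real.log (y - 1) + Real.log (Real.Gamma (y - 1))) := by
    filter_upwards [isOpen_Ioi.mem_nhds (show x + 1 ∈ Set.Ioi (1:ℝ) by
      simp only [Set.mem_Ioi]; linarith)] with y hy
    simp only [Set.mem_Ioi] at hy
    have hy1 : 0 < y - 1 := by linarith
    have hg : Real.Gamma y = (y - 1) * Real.Gamma (y - 1) := by
      have h := Real.Gamma_add_one (ne_of_gt hy1)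
      rw [sub_add_cancel] at h
      exact h
    rw [hg, Real.log_mul (ne_of_gt hy1) (ne_of_gt (Real.Gamma_pos_of_pos hy1))]
  have hinner : HasDerivAt (fun y : ℝ => y - 1) 1 (x+1) := (hasDerivAt_id (x+1)).sub_const 1
  have hd1 : HasDerivAt (fun y : ℝ => Real.log (y - 1)) (1/x) (x+1) := by
    have houter : HasDerivAt Real.log x⁻¹ (x + 1 - 1) := by
      rw [show x + 1 - 1 = x by ring]
      exact Real.hasDerivAt_log (ne_of_gt hx)
    have h := houter.comp (x+1) hinner
    simpa [one_div, Function.comp_def] using h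
  have hd2 : HasDerivAt (fun y : ℝ => Real.log (Real.Gamma (y - 1))) (digamma x) (x+1) := by
    have houter : HasDerivAt (fun y => Real.log (Real.Gamma y)) (digamma x) (x + 1 - 1) := by
      rw [show x + 1 - 1 = x by ring]
      exact (logGamma_diffAt x hx).hasDerivAt
    have h := houter.comp (x+1) hinner
    simpa [Function.comp_def] using h
  have hde : digamma (x+1)
      = deriv (fun y => Real.log (y-1) + Real.log (Real.Gamma (y-1))) (x+1) := heq.deriv_eq
  rw [hde, show (fun y => Real.log (y-1) + Real.log (Real.Gamma (y-1))) = ((fun y : ℝ => Real.log (y - 1)) + fun y => Real.log (Real.Gamma (y - 1))) from rfl, (hd1.add hd2).deriv]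
  ring

lemma digamma_add_nat (a : ℝ) (ha : 0 < a) (n : ℕ) :
    digamma (a + n) = digamma a + ∑ j ∈ Finset.range n, 1 / (a + j) := by
  induction n with
  | zero => simp
  | succ n ih =>
    have h1 : a + ((n:ℕ)+1:ℕ) = (a + n) + 1 := by push_cast; ring
    have h2 : (0:ℝ) < a + n := by positivity
    rw [h1, digamma_add_one (a + n) h2, ih, Finset.sum_range_succ]
    ring

theorem stmt_0 (n : ℕ) (hn : 1 ≤ n) (s : ℝ) (hs : 0 < s) :
    ∑ k ∈ Finset.Icc 1 n,
      (1 / (k : ℝ)) * (Real.Gamma ((n : ℝ) + 1) * Real.Gamma ((n : ℝ) - (k : ℝ) + 2 * s)) /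
        (Real.Gamma ((n : ℝ) - (k : ℝ) + 1) * Real.Gamma ((n : ℝ) + 2 * s))
      = digamma (2 * s + n) - digamma (2 * s) := by
  have ha : (0:ℝ) < 2 * s := by linarith
  have conv1 : ∀ i ∈ Finset.range n,
      (1 / ((1+i:ℕ) : ℝ)) * (Real.Gamma ((n:ℝ) + 1) * Real.Gamma ((n:ℝ) - ((1+i:ℕ):ℝ) + 2*s)) /
          (Real.Gamma ((n:ℝ) - ((1+i:ℕ):ℝ) + 1) * Real.Gamma ((n:ℝ) + 2*s))
        = auxNum n (i+1) / (((i:ℝ)+1) * auxDen (2*s) n (i+1)) := by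
    intro i hi
    simp only [Finset.mem_range] at hi
    have hk : i + 1 ≤ n := hi
    have g1 := Gamma_eq_num n (i+1) hk
    have g2 := Gamma_eq_den (2*s) ha n (i+1) hk
    rw [Nat.add_comm 1 i]
    push_cast at g1 g2 ⊢
    rw [g1, g2]
    have hkr : (i:ℝ) + 1 ≤ n := by exact_mod_cast hk
    have p1 : 0 < Real.Gamma ((n:ℝ) - ((i:ℝ)+1) + 1) := Real.Gamma_pos_of_pos (by linarith)
    have p2 : 0 < Real.Gamma ((n:ℝ) - ((i:ℝ)+1) + 2*s) := Real.Gamma_pos_of_pos (by linarith)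
    have p3 : 0 < auxDen (2*s) n (i+1) := auxDen_pos (2*s) ha n (i+1) hk
    have p4 : (0:ℝ) < (i:ℝ) + 1 := by positivity
    field_simp
  rw [← Finset.Ico_add_one_right_eq_Icc, Finset.sum_Ico_eq_sum_range]
  simp only [Nat.add_sub_cancel]
  rw [Finset.sum_congr rfl conv1, main_sum (2*s) ha n, digamma_add_nat (2*s) ha n]
  ring
end

section
/- For every nonnegative integer ℓ and real numbers a, b with a − b not a nonpositive integer, Σ_{r=0}^ℓ (−1)^r · C(ℓ,r) · Γ(r+b)/Γ(r+a) = B(ℓ+a−b, b)/Γ(a−b), where B is the Beta function. -/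
open Finset

theorem aux3 (ℓ : ℕ) (a b : ℝ) (hb : 0 < b) (hab : 0 < a - b) :
    ∑ r ∈ Finset.range (ℓ + 1),
        (-1 : ℝ) ^ r * (ℓ.choose r : ℝ) * (Real.Gamma ((r : ℝ) + b) / Real.Gamma ((r : ℝ) + a))
      = Real.Gamma ((ℓ : ℝ) + a - b) * Real.Gamma b /
          (Real.Gamma ((ℓ : ℝ) + a) * Real.Gamma (a - b)) := by
  induction ℓ generalizing a b with
  | zero =>
    have h1 : Real.Gamma (a - b) ≠ 0 := (Real.Gamma_pos_of_pos hab).ne'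
    have h2 : Real.Gamma a ≠ 0 := (Real.Gamma_pos_of_pos (by linarith)).ne'
    simp only [Nat.cast_zero, zero_add, Finset.sum_range_one, pow_zero, Nat.choose_zero_right,
      Nat.cast_one, one_mul]
    field_simp
  | succ n ih =>
    have hsplit :
        ∑ r ∈ Finset.range (n + 1 + 1),
          (-1 : ℝ) ^ r * ((n+1).choose r : ℝ) * (Real.Gamma ((r : ℝ) + b) / Real.Gamma ((r : ℝ) + a))
        = (∑ r ∈ Finset.range (n + 1),
            (-1 : ℝ) ^ r * (n.choose r : ℝ) * (Real.Gamma ((r : ℝ) + b) / Real.Gamma ((r : ℝ) + a)))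
          - ∑ r ∈ Finset.range (n + 1),
            (-1 : ℝ) ^ r * (n.choose r : ℝ) * (Real.Gamma ((r : ℝ) + (b+1)) / Real.Gamma ((r : ℝ) + (a+1))) := by
      rw [Finset.sum_range_succ' _ (n+1)]
      have hA : ∑ r ∈ Finset.range (n + 1),
          (-1 : ℝ) ^ r * (n.choose r : ℝ) * (Real.Gamma ((r : ℝ) + b) / Real.Gamma ((r : ℝ) + a))
          = (∑ i ∈ Finset.range n,
              (-1 : ℝ) ^ (i+1) * (n.choose (i+1) : ℝ) * (Real.Gamma ((↑(i+1) : ℝ) + b) / Real.Gamma ((↑(i+1) : ℝ) + a)))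
            + (-1:ℝ)^0 * (n.choose 0 : ℝ) * (Real.Gamma ((0:ℝ) + b) / Real.Gamma ((0:ℝ) + a)) := by
        rw [Finset.sum_range_succ' _ n]; norm_num
      have hB : ∑ i ∈ Finset.range (n+1),
          (-1 : ℝ) ^ (i+1) * (n.choose (i+1) : ℝ) * (Real.Gamma ((↑(i+1) : ℝ) + b) / Real.Gamma ((↑(i+1) : ℝ) + a))
          = ∑ i ∈ Finset.range n,
          (-1 : ℝ) ^ (i+1) * (n.choose (i+1) : ℝ) * (Real.Gamma ((↑(i+1) : ℝ) + b) / Real.Gamma ((↑(i+1) : ℝ) + a)) := by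
        rw [Finset.sum_range_succ]
        simp [Nat.choose_succ_self]
      have : ∀ i ∈ Finset.range (n+1),
          (-1 : ℝ) ^ (i+1) * ((n+1).choose (i+1) : ℝ) * (Real.Gamma ((↑(i+1) : ℝ) + b) / Real.Gamma ((↑(i+1) : ℝ) + a))
          = ((-1 : ℝ) ^ (i+1) * (n.choose (i+1) : ℝ) * (Real.Gamma ((↑(i+1) : ℝ) + b) / Real.Gamma ((↑(i+1) : ℝ) + a))
            - (-1 : ℝ) ^ i * (n.choose i : ℝ) * (Real.Gamma ((↑i : ℝ) + (b+1)) / Real.Gamma ((↑i : ℝ) + (a+1)))) := by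
        intro i _
        have hch : ((n+1).choose (i+1) : ℝ) = (n.choose i : ℝ) + (n.choose (i+1) : ℝ) := by
          rw [Nat.choose_succ_succ]; push_cast; ring
        have harg : ((↑(i+1) : ℝ) + b) = (↑i : ℝ) + (b+1) := by push_cast; ring
        have harg2 : ((↑(i+1) : ℝ) + a) = (↑i : ℝ) + (a+1) := by push_cast; ring
        rw [hch, harg, harg2, pow_succ]
        ring
      rw [Finset.sum_congr rfl this, Finset.sum_sub_distrib, hB, hA]
      simp only [Nat.choose_zero_right]
      push_cast
      ring
    rw [hsplit, ih a b hb hab, ih (a+1) (b+1) (by linarith) (by linarith)]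
    have hn0 : (0:ℝ) ≤ (n:ℝ) := Nat.cast_nonneg n
    have g1 : (0:ℝ) < (n:ℝ) + a - b := by linarith
    have g2 : (0:ℝ) < (n:ℝ) + a := by
      have : (0:ℝ) ≤ (n:ℝ) := Nat.cast_nonneg n
      linarith
    have e1 : Real.Gamma ((↑(n+1) : ℝ) + a - b) = ((n:ℝ) + a - b) * Real.Gamma ((n:ℝ) + a - b) := by
      have : ((↑(n+1) : ℝ) + a - b) = ((n:ℝ) + a - b) + 1 := by push_cast; ring
      rw [this, Real.Gamma_add_one g1.ne']
    have e2 : Real.Gamma ((↑(n+1) : ℝ) + a) = ((n:ℝ) + a) * Real.Gamma ((n:ℝ) + a) := by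
      have : ((↑(n+1) : ℝ) + a) = ((n:ℝ) + a) + 1 := by push_cast; ring
      rw [this, Real.Gamma_add_one g2.ne']
    have e3 : Real.Gamma (b + 1) = b * Real.Gamma b := Real.Gamma_add_one hb.ne'
    have e4 : ((n:ℝ) + (a+1) - (b+1)) = (n:ℝ) + a - b := by ring
    have e5 : ((a+1) - (b+1)) = a - b := by ring
    rw [e1, e2, e3, e4, e5]
    have n1 : Real.Gamma ((n:ℝ) + a - b) ≠ 0 := (Real.Gamma_pos_of_pos g1).ne'
    have n2 : Real.Gamma ((n:ℝ) + a) ≠ 0 := (Real.Gamma_pos_of_pos g2).ne'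
    have n3 : Real.Gamma (a - b) ≠ 0 := (Real.Gamma_pos_of_pos hab).ne'
    have n4 : Real.Gamma ((n:ℝ) + (a+1)) = ((n:ℝ)+a) * Real.Gamma ((n:ℝ) + a) := by
      have : ((n:ℝ) + (a+1)) = ((n:ℝ) + a) + 1 := by ring
      rw [this, Real.Gamma_add_one g2.ne']
    rw [n4]
    field_simp

theorem stmt_3 (ℓ : ℕ) (hℓ : 1 ≤ ℓ) (a b : ℝ) (hb : 0 < b) (hab : 0 < a - b) :
    ∑ r ∈ Finset.range (ℓ + 1),
        (-1 : ℝ) ^ r * (ℓ.choose r : ℝ) * (Real.Gamma ((r : ℝ) + b) / Real.Gamma ((r : ℝ) + a))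
      = (Real.Gamma ((ℓ : ℝ) + a - b) * Real.Gamma b / Real.Gamma ((ℓ : ℝ) + a)) /
          Real.Gamma (a - b) := by
  rw [aux3 ℓ a b hb hab, div_div]
end

section
/- For integers n ≥ 1, 1 ≤ k ≤ n, and real s > 0, Σ_{j=0}^{k} (−1)^{k−j} · C(n,j) · C(n−j, k−j) · h_s(n−j) = −φ_s(k,n), where h_s(m) = Σ_{i=1}^m 1/(i+2s−1) and φ_s(k,n) = (1/k)·Γ(n+1)Γ(n−k+2s)/(Γ(n−k+1)Γ(n+2s)). -/
open Finset

/-- Shifted harmonic numbers `h_s(m) = ∑_{i=1}^m 1/(i+2s-1)`. -/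
noncomputable def hShift (s : ℝ) (m : ℕ) : ℝ := ∑ i ∈ Finset.Icc 1 m, 1 / ((i : ℝ) + 2 * s - 1)

/-- The rates `φ_s(k,n) = (1/k)·Γ(n+1)Γ(n−k+2s)/(Γ(n−k+1)Γ(n+2s))`. -/
noncomputable def phiRate (s : ℝ) (k n : ℕ) : ℝ :=
  (1 / (k : ℝ)) * (Real.Gamma ((n : ℝ) + 1) * Real.Gamma ((n : ℝ) - (k : ℝ) + 2 * s)) /
    (Real.Gamma ((n : ℝ) - (k : ℝ) + 1) * Real.Gamma ((n : ℝ) + 2 * s))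

/-- finite-difference reduction lemma -/
lemma diff_lemma (m : ℕ) (g : ℕ → ℝ) :
    ∑ j ∈ Finset.range (m + 2), (-1 : ℝ) ^ j * ((m+1).choose j : ℝ) * g j
      = ∑ j ∈ Finset.range (m + 1), (-1 : ℝ) ^ j * (m.choose j : ℝ) * (g j - g (j+1)) := by
  have hL : ∑ j ∈ Finset.range (m + 2), (-1 : ℝ) ^ j * ((m+1).choose j : ℝ) * g j
      = (∑ j ∈ Finset.range (m + 1), (-1 : ℝ) ^ (j+1) * ((m+1).choose (j+1) : ℝ) * g (j+1))
        + g 0 := by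
    rw [Finset.sum_range_succ' (fun j => (-1 : ℝ) ^ j * ((m+1).choose j : ℝ) * g j) (m+1)]
    simp
  rw [hL]
  have hP : ∀ j, ((m+1).choose (j+1) : ℝ) = (m.choose j : ℝ) + (m.choose (j+1) : ℝ) := by
    intro j; rw [Nat.choose_succ_succ]; push_cast; ring
  have hB : ∑ j ∈ Finset.range (m + 1), (-1 : ℝ) ^ (j+1) * ((m+1).choose (j+1) : ℝ) * g (j+1)
      = (∑ j ∈ Finset.range (m + 1), (-1 : ℝ) ^ (j+1) * (m.choose j : ℝ) * g (j+1))
        + ∑ j ∈ Finset.range (m + 1), (-1 : ℝ) ^ (j+1) * (m.choose (j+1) : ℝ) * g (j+1) := by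
    rw [← Finset.sum_add_distrib]
    refine Finset.sum_congr rfl fun j _ => ?_
    rw [hP]; ring
  rw [hB]
  have hC : ∑ j ∈ Finset.range (m + 1), (-1 : ℝ) ^ (j+1) * (m.choose (j+1) : ℝ) * g (j+1)
      = (∑ j ∈ Finset.range (m + 1), (-1 : ℝ) ^ j * (m.choose j : ℝ) * g j) - g 0 := by
    have : ∑ j ∈ Finset.range (m + 2), (-1 : ℝ) ^ j * (m.choose j : ℝ) * g j
        = (∑ j ∈ Finset.range (m + 1), (-1 : ℝ) ^ (j+1) * (m.choose (j+1) : ℝ) * g (j+1)) + g 0 := by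
      rw [Finset.sum_range_succ' (fun j => (-1 : ℝ) ^ j * (m.choose j : ℝ) * g j) (m+1)]
      simp
    have h2 : ∑ j ∈ Finset.range (m + 2), (-1 : ℝ) ^ j * (m.choose j : ℝ) * g j
        = ∑ j ∈ Finset.range (m + 1), (-1 : ℝ) ^ j * (m.choose j : ℝ) * g j := by
      rw [Finset.sum_range_succ]
      simp [Nat.choose_eq_zero_of_lt (Nat.lt_succ_self m)]
    rw [h2] at this; linarith
  rw [hC]
  have : ∀ j ∈ Finset.range (m+1),
      (-1 : ℝ) ^ j * (m.choose j : ℝ) * (g j - g (j+1))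
      = (-1 : ℝ) ^ j * (m.choose j : ℝ) * g j + (-1 : ℝ) ^ (j+1) * (m.choose j : ℝ) * g (j+1) := by
    intro j _; ring
  rw [Finset.sum_congr rfl this, Finset.sum_add_distrib]
  ring

/-- key rational identity -/
lemma key_sum (m : ℕ) : ∀ x : ℝ, 0 < x →
    ∑ j ∈ Finset.range (m + 1), (-1 : ℝ) ^ j * (m.choose j : ℝ) / (x + j)
      = (m.factorial : ℝ) / ∏ i ∈ Finset.range (m + 1), (x + i) := by
  induction m with
  | zero => intro x hx; simp
  | succ m ih =>
    intro x hx
    have hrw : ∀ j ∈ Finset.range (m+2), (-1 : ℝ) ^ j * ((m+1).choose j : ℝ) / (x + j)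
        = (-1 : ℝ) ^ j * ((m+1).choose j : ℝ) * (1 / (x + j)) := by
      intro j _; ring
    rw [Finset.sum_congr rfl hrw, diff_lemma m (fun j => 1 / (x + j))]
    have hsplit : ∀ j ∈ Finset.range (m+1),
        (-1:ℝ)^j * (m.choose j : ℝ) * (1/(x+(j:ℝ)) - 1/(x+((j+1:ℕ):ℝ)))
        = (-1:ℝ)^j * (m.choose j : ℝ)/(x+(j:ℝ)) - (-1:ℝ)^j * (m.choose j : ℝ)/((x+1)+(j:ℝ)) := by
      intro j _; push_cast; ring
    rw [Finset.sum_congr rfl hsplit, Finset.sum_sub_distrib, ih x hx, ih (x+1) (by positivity)]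
    have e1 : ∏ i ∈ Finset.range (m+2), (x+(i:ℝ))
        = (∏ i ∈ Finset.range (m+1), (x+(i:ℝ))) * (x + ((m:ℝ)+1)) := by
      rw [Finset.prod_range_succ]; push_cast; ring_nf
    have e2 : ∏ i ∈ Finset.range (m+2), (x+(i:ℝ))
        = x * ∏ i ∈ Finset.range (m+1), ((x+1)+(i:ℝ)) := by
      rw [Finset.prod_range_succ']
      push_cast
      rw [mul_comm]
      simp only [add_zero]
      congr 1
      exact Finset.prod_congr rfl fun i _ => by ring
    have hprod1 : (0:ℝ) < ∏ i ∈ Finset.range (m+1), (x + (i:ℝ)) :=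
      Finset.prod_pos (fun i _ => by positivity)
    have hprod2 : (0:ℝ) < ∏ i ∈ Finset.range (m+1), ((x+1) + (i:ℝ)) :=
      Finset.prod_pos (fun i _ => by positivity)
    have key : x * ∏ i ∈ Finset.range (m+1), ((x+1)+(i:ℝ))
        = (∏ i ∈ Finset.range (m+1), (x+(i:ℝ))) * (x + ((m:ℝ)+1)) := by
      rw [← e2, e1]
    rw [e1, Nat.factorial_succ]
    push_cast
    have hx1 : (0:ℝ) < x + ((m:ℝ)+1) := by positivity
    rw [div_sub_div _ _ hprod1.ne' hprod2.ne',
      div_eq_div_iff (by positivity) (by positivity)]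
    linear_combination ((m.factorial : ℝ) * ∏ i ∈ Finset.range (m+1), (x+(i:ℝ))) * key

lemma gamma_shift (K : ℕ) (z : ℝ) (hz : 0 < z) :
    Real.Gamma (z + K) = (∏ i ∈ Finset.range K, (z + i)) * Real.Gamma z := by
  induction K with
  | zero => simp
  | succ K ih =>
    have h1 : z + (K+1 : ℕ) = (z + K) + 1 := by push_cast; ring
    have h2 : z + (K : ℝ) ≠ 0 := by positivity
    rw [h1, Real.Gamma_add_one h2, ih, Finset.prod_range_succ]
    ring

theorem stmt_4 (n k : ℕ) (hn : 1 ≤ n) (hk1 : 1 ≤ k) (hkn : k ≤ n) (s : ℝ) (hs : 0 < s) :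
    ∑ j ∈ Finset.range (k + 1),
        (-1 : ℝ) ^ (k - j) * (n.choose j : ℝ) * ((n - j).choose (k - j) : ℝ) * hShift s (n - j)
      = -phiRate s k n := by
  obtain ⟨m, rfl⟩ : ∃ m, k = m + 1 := ⟨k - 1, (Nat.succ_pred_eq_of_pos hk1).symm⟩
  have hmn : m + 1 ≤ n := hkn
  set y : ℝ := ((n - (m+1) : ℕ) : ℝ) + 2 * s with hy
  have hy0 : 0 < y := by positivity
  have hterm : ∀ j ∈ Finset.range (m+1+1),
      (-1:ℝ)^(m+1-j) * (n.choose j : ℝ) * ((n-j).choose (m+1-j) : ℝ) * hShift s (n-j)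
      = (-1:ℝ)^(m+1) * (n.choose (m+1) : ℝ)
          * ((-1:ℝ)^j * ((m+1).choose j : ℝ) * hShift s (n-j)) := by
    intro j hj
    have hj' : j ≤ m+1 := Nat.lt_succ_iff.mp (Finset.mem_range.mp hj)
    have hch : (n.choose j : ℝ) * ((n-j).choose (m+1-j) : ℝ)
        = (n.choose (m+1) : ℝ) * ((m+1).choose j : ℝ) := by
      exact_mod_cast congrArg (Nat.cast (R := ℝ)) (Nat.choose_mul (n := n) hj').symm
    have hsgn : (-1:ℝ)^(m+1-j) = (-1:ℝ)^(m+1) * (-1:ℝ)^j := by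
      have h1 := pow_add (-1:ℝ) (m+1-j) j
      rw [Nat.sub_add_cancel hj'] at h1
      rw [h1, mul_assoc, ← pow_add, Even.neg_one_pow ⟨j, rfl⟩, mul_one]
    rw [hsgn, show (-1:ℝ)^(m+1) * (-1:ℝ)^j * (n.choose j : ℝ) * ((n-j).choose (m+1-j) : ℝ)
        = (-1:ℝ)^(m+1) * (-1:ℝ)^j * ((n.choose j : ℝ) * ((n-j).choose (m+1-j) : ℝ)) from by ring,
      hch]
    ring
  rw [Finset.sum_congr rfl hterm, ← Finset.mul_sum,
    diff_lemma m (fun j => hShift s (n - j))]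
  have hdiff : ∀ j ∈ Finset.range (m+1),
      (-1:ℝ)^j * (m.choose j : ℝ) * (hShift s (n-j) - hShift s (n-(j+1)))
      = (-1:ℝ)^j * (m.choose j : ℝ) * (1 / (((n-j:ℕ):ℝ) + 2*s - 1)) := by
    intro j hj
    have hj' : j ≤ m := Nat.lt_succ_iff.mp (Finset.mem_range.mp hj)
    obtain ⟨u, hu⟩ : ∃ u, n - j = u + 1 := ⟨n - j - 1, by omega⟩
    have h2 : n - (j+1) = u := by omega
    rw [hu, h2]
    congr 1
    unfold hShift
    rw [Finset.sum_Icc_succ_top (by omega : 1 ≤ u+1)]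
    push_cast
    ring
  rw [Finset.sum_congr rfl hdiff,
    ← Finset.sum_range_reflect
      (fun j => (-1:ℝ)^j * (m.choose j : ℝ) * (1 / (((n-j:ℕ):ℝ) + 2*s - 1))) (m+1)]
  have hterm2 : ∀ j ∈ Finset.range (m+1),
      (-1:ℝ)^(m+1-1-j) * (m.choose (m+1-1-j) : ℝ) * (1 / (((n-(m+1-1-j):ℕ):ℝ) + 2*s - 1))
      = (-1:ℝ)^m * ((-1:ℝ)^j * (m.choose j : ℝ) / (y + (j:ℝ))) := by
    intro j hj
    have hj' : j ≤ m := Nat.lt_succ_iff.mp (Finset.mem_range.mp hj)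
    have e0 : m + 1 - 1 - j = m - j := by omega
    have hsgn : (-1:ℝ)^(m-j) = (-1:ℝ)^m * (-1:ℝ)^j := by
      have h1 := pow_add (-1:ℝ) (m-j) j
      rw [Nat.sub_add_cancel hj'] at h1
      rw [h1, mul_assoc, ← pow_add, Even.neg_one_pow ⟨j, rfl⟩, mul_one]
    have hcs : m.choose (m - j) = m.choose j := Nat.choose_symm hj'
    have hden : ((n - (m - j) : ℕ) : ℝ) + 2*s - 1 = y + (j:ℝ) := by
      have h3 : n - (m - j) = (n - (m+1)) + (j+1) := by omega
      rw [h3, hy]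
      push_cast
      ring
    rw [e0, hsgn, hcs, hden]
    ring
  rw [Finset.sum_congr rfl hterm2, ← Finset.mul_sum, key_sum m y hy0]
  -- now compute phiRate
  have hΓy : Real.Gamma y ≠ 0 := (Real.Gamma_pos_of_pos hy0).ne'
  have hPpos : (0:ℝ) < ∏ i ∈ Finset.range (m+1), (y + (i:ℝ)) :=
    Finset.prod_pos (fun i _ => by positivity)
  have hphi : phiRate s (m+1) n
      = (n.choose (m+1) : ℝ) * (m.factorial : ℝ) / ∏ i ∈ Finset.range (m+1), (y + (i:ℝ)) := by
    have e1 : (n:ℝ) - ((m+1:ℕ):ℝ) + 2*s = y := by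
      rw [hy]; push_cast [hmn]; ring
    have e2 : (n:ℝ) + 2*s = y + ((m+1:ℕ):ℝ) := by
      rw [hy]; push_cast [hmn]; ring
    have e3 : (n:ℝ) - ((m+1:ℕ):ℝ) + 1 = ((n - (m+1) : ℕ):ℝ) + 1 := by
      push_cast [hmn]; ring
    unfold phiRate
    rw [e1, e2, e3, Real.Gamma_nat_eq_factorial, Real.Gamma_nat_eq_factorial,
      gamma_shift (m+1) y hy0]
    have hfac : (n.factorial : ℝ)
        = (n.choose (m+1) : ℝ) * ((m+1).factorial : ℝ) * ((n - (m+1)).factorial : ℝ) := by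
      exact_mod_cast congrArg (Nat.cast (R := ℝ))
        (Nat.choose_mul_factorial_mul_factorial hmn).symm
    rw [hfac]
    have hf1 : (0:ℝ) < ((n - (m+1)).factorial : ℝ) := by positivity
    have hm1 : (0:ℝ) < ((m+1:ℕ):ℝ) := by positivity
    field_simp
    rw [Nat.factorial_succ]
    push_cast
    ring
  rw [hphi]
  have hodd : (-1:ℝ)^(m+1) * (-1:ℝ)^m = -1 := by
    rw [← pow_add]
    exact Odd.neg_one_pow ⟨m, by ring⟩
  linear_combination ((n.choose (m+1) : ℝ) * ((m.factorial : ℝ)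
    / ∏ i ∈ Finset.range (m+1), (y + (i:ℝ)))) * hodd
end

section
/- For integers n ≥ 0, k ≥ 1, and real s > 0, Σ_{j=0}^{k} (−1)^j · Γ(n+2s+k)/(j!·(k−j)!·Γ(n+2s)) · h_s(n+j) = −1/k, where h_s(m) = Σ_{i=1}^m 1/(i+2s−1). -/
open Finset

lemma hShift_succ (s : ℝ) (m : ℕ) :
    hShift s (m + 1) = hShift s m + 1 / ((m : ℝ) + 2 * s) := by
  unfold hShift
  rw [Finset.sum_Icc_succ_top (by omega : 1 ≤ m + 1)]
  congr 1
  push_cast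
  ring

lemma prod_pos_aux (x : ℝ) (hx : 0 < x) (k : ℕ) :
    0 < ∏ i ∈ Finset.range k, (x + i) := by
  apply Finset.prod_pos
  intro i _
  positivity

lemma key (s : ℝ) (hs : 0 < s) :
    ∀ k n : ℕ, ∑ j ∈ Finset.range (k + 2),
        (-1 : ℝ) ^ j * ((k + 1).choose j : ℝ) * hShift s (n + j)
      = -(k.factorial : ℝ) / ∏ i ∈ Finset.range (k + 1), ((n : ℝ) + 2 * s + i) := by
  intro k
  induction k with
  | zero =>
      intro n
      have hx : (0:ℝ) < (n : ℝ) + 2 * s := by positivity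
      simp [Finset.sum_range_succ, hShift_succ]
      rw [neg_div, one_div]
  | succ k ih =>
      intro n
      have hx : (0:ℝ) < (n : ℝ) + 2 * s := by positivity
      set x : ℝ := (n : ℝ) + 2 * s with hxdef
      -- abbreviations
      set G : ℕ → ℝ := fun j => (-1 : ℝ) ^ j * ((k + 1).choose j : ℝ) * hShift s (n + j) with hG
      have step1 : ∑ j ∈ Finset.range (k + 3),
          (-1 : ℝ) ^ j * ((k + 2).choose j : ℝ) * hShift s (n + j)
          = (∑ j ∈ Finset.range (k + 2),
              (-1 : ℝ) ^ (j+1) * ((k + 2).choose (j+1) : ℝ) * hShift s (n + (j+1)))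
            + hShift s n := by
        rw [Finset.sum_range_succ' (fun j => (-1 : ℝ) ^ j * ((k + 2).choose j : ℝ) * hShift s (n + j)) (k+2)]
        simp
      have step2 : ∀ j, (-1 : ℝ) ^ (j+1) * ((k + 2).choose (j+1) : ℝ) * hShift s (n + (j+1))
          = -((-1 : ℝ) ^ j * ((k + 1).choose j : ℝ) * hShift s ((n+1) + j)) + G (j+1) := by
        intro j
        have hch : ((k + 2).choose (j+1) : ℝ) = ((k+1).choose j : ℝ) + ((k+1).choose (j+1) : ℝ) := by
          rw [show k + 2 = (k+1) + 1 from rfl, Nat.choose_succ_succ]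
          push_cast; ring
        have hn : n + (j + 1) = (n + 1) + j := by omega
        simp only [hG]
        rw [hch, hn]
        ring
      have step3 : ∑ j ∈ Finset.range (k + 2), G (j + 1)
          = (∑ j ∈ Finset.range (k + 2), G j) - hShift s n := by
        have : ∑ j ∈ Finset.range (k + 3), G j
            = (∑ j ∈ Finset.range (k + 2), G (j+1)) + G 0 := Finset.sum_range_succ' G (k+2)
        have htop : G (k + 2) = 0 := by
          simp [hG, Nat.choose_eq_zero_of_lt (by omega : k + 1 < k + 2)]
        have hsum3 : ∑ j ∈ Finset.range (k + 3), G j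
            = (∑ j ∈ Finset.range (k + 2), G j) + G (k+2) := Finset.sum_range_succ G (k+2)
        have hG0 : G 0 = hShift s n := by simp [hG]
        rw [hsum3, htop, hG0] at this
        linarith [this]
      have ih1 := ih n
      have ih2 := ih (n + 1)
      -- products
      have hPn : (0:ℝ) < ∏ i ∈ Finset.range (k + 1), (x + i) := by
        apply Finset.prod_pos; intro i _; positivity
      have hPn1 : (0:ℝ) < ∏ i ∈ Finset.range (k + 1), (((n:ℝ)+1) + 2*s + i) := by
        apply Finset.prod_pos; intro i _; positivity
      have hQ : ∏ i ∈ Finset.range (k + 2), (x + i)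
          = (∏ i ∈ Finset.range (k + 1), (((n:ℝ)+1) + 2*s + i)) * x := by
        rw [Finset.prod_range_succ' (fun i => x + i) (k+1)]
        simp only [Nat.cast_zero, add_zero]
        congr 1
        apply Finset.prod_congr rfl
        intro i _
        simp only [hxdef]
        push_cast
        ring
      have hQ2 : ∏ i ∈ Finset.range (k + 2), (x + i)
          = (∏ i ∈ Finset.range (k + 1), (x + i)) * (x + (k+1)) := by
        rw [Finset.prod_range_succ]
        push_cast; ring
      calc ∑ j ∈ Finset.range (k + 1 + 2),
          (-1 : ℝ) ^ j * ((k + 1 + 1).choose j : ℝ) * hShift s (n + j)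
          = (∑ j ∈ Finset.range (k + 2),
              (-1 : ℝ) ^ (j+1) * ((k + 2).choose (j+1) : ℝ) * hShift s (n + (j+1)))
            + hShift s n := step1
        _ = (∑ j ∈ Finset.range (k + 2),
              (-((-1 : ℝ) ^ j * ((k + 1).choose j : ℝ) * hShift s ((n+1) + j)) + G (j+1)))
            + hShift s n := by
              rw [Finset.sum_congr rfl (fun j _ => step2 j)]
        _ = -(∑ j ∈ Finset.range (k + 2),
              (-1 : ℝ) ^ j * ((k + 1).choose j : ℝ) * hShift s ((n+1) + j))
            + (∑ j ∈ Finset.range (k + 2), G (j+1)) + hShift s n := by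
              rw [Finset.sum_add_distrib, Finset.sum_neg_distrib]
        _ = -(∑ j ∈ Finset.range (k + 2),
              (-1 : ℝ) ^ j * ((k + 1).choose j : ℝ) * hShift s ((n+1) + j))
            + (∑ j ∈ Finset.range (k + 2), G j) := by
              rw [step3]; ring
        _ = -(-(k.factorial : ℝ) / ∏ i ∈ Finset.range (k + 1), (((n:ℝ)+1) + 2*s + i))
            + (-(k.factorial : ℝ) / ∏ i ∈ Finset.range (k + 1), (x + i)) := by
              rw [ih1, ih2]; push_cast; rw [hxdef]
        _ = -((k+1).factorial : ℝ) / ∏ i ∈ Finset.range (k + 1 + 1), ((n:ℝ) + 2 * s + i) := by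
              have hE : ∀ i : ℕ, (n:ℝ) + 2 * s + i = x + i := fun i => rfl
              rw [show (∏ i ∈ Finset.range (k + 1 + 1), ((n:ℝ) + 2 * s + (i:ℝ))) = ∏ i ∈ Finset.range (k + 2), (x + i) from rfl]
              rw [hQ2]
              have hxb : x * (∏ i ∈ Finset.range (k + 1), (((n:ℝ)+1) + 2*s + i)) = (∏ i ∈ Finset.range (k + 1), (x + i)) * (x + (k+1)) := by
                rw [← hQ2, hQ]; ring
              have hf : ((k+1).factorial : ℝ) = (k+1) * k.factorial := by
                rw [Nat.factorial_succ]; push_cast; ring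
              field_simp
              rw [hf]
              linear_combination (-(k.factorial : ℝ)) * hxb

lemma Gamma_shift (x : ℝ) (hx : 0 < x) (k : ℕ) :
    Real.Gamma (x + k) = (∏ i ∈ Finset.range k, (x + i)) * Real.Gamma x := by
  induction k with
  | zero => simp
  | succ k ih =>
      have h1 : x + (k+1 : ℕ) = (x + k) + 1 := by push_cast; ring
      rw [h1, Real.Gamma_add_one (by positivity), ih, Finset.prod_range_succ]
      ring

theorem stmt_5 (n k : ℕ) (hk : 1 ≤ k) (s : ℝ) (hs : 0 < s) :
    ∑ j ∈ Finset.range (k + 1),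
        (-1 : ℝ) ^ j * Real.Gamma ((n : ℝ) + 2 * s + k) /
            ((j.factorial : ℝ) * ((k - j).factorial : ℝ) * Real.Gamma ((n : ℝ) + 2 * s)) *
          hShift s (n + j)
      = -(1 / (k : ℝ)) := by
  obtain ⟨m, rfl⟩ : ∃ m, k = m + 1 := ⟨k - 1, by omega⟩
  set x : ℝ := (n : ℝ) + 2 * s with hxdef
  have hx : 0 < x := by positivity
  have hΓ : Real.Gamma (x + (m+1 : ℕ)) = (∏ i ∈ Finset.range (m+1), (x + i)) * Real.Gamma x :=
    Gamma_shift x hx (m+1)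
  have hΓx : Real.Gamma x ≠ 0 := ne_of_gt (Real.Gamma_pos_of_pos hx)
  have hP : (0:ℝ) < ∏ i ∈ Finset.range (m+1), (x + i) := by
    apply Finset.prod_pos; intro i _; positivity
  have hterm : ∀ j ∈ Finset.range (m + 2),
      (-1 : ℝ) ^ j * Real.Gamma (x + (m+1 : ℕ)) /
          ((j.factorial : ℝ) * (((m+1) - j).factorial : ℝ) * Real.Gamma x) * hShift s (n + j)
      = ((∏ i ∈ Finset.range (m+1), (x + i)) / ((m+1).factorial : ℝ)) *
          ((-1 : ℝ) ^ j * (((m+1).choose j : ℕ) : ℝ) * hShift s (n + j)) := by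
    intro j hj
    have hjm : j ≤ m + 1 := by simp at hj; omega
    have hcf : (((m+1).choose j : ℕ) : ℝ) * (j.factorial : ℝ) * (((m+1) - j).factorial : ℝ)
        = ((m+1).factorial : ℝ) := by
      exact_mod_cast congrArg (Nat.cast (R := ℝ)) (Nat.choose_mul_factorial_mul_factorial hjm)
    have hj1 : (j.factorial : ℝ) ≠ 0 := by positivity
    have hj2 : (((m+1) - j).factorial : ℝ) ≠ 0 := by positivity
    have hm1 : (((m+1).factorial : ℕ) : ℝ) ≠ 0 := by positivity
    rw [hΓ]
    field_simp
    linear_combination (-hShift s (n + j)) * hcf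
  have hgoalrw : ((n : ℝ) + 2 * s + ((m+1 : ℕ) : ℝ)) = x + ((m+1 : ℕ) : ℝ) := rfl
  calc ∑ j ∈ Finset.range (m + 1 + 1),
        (-1 : ℝ) ^ j * Real.Gamma ((n : ℝ) + 2 * s + (m+1 : ℕ)) /
            ((j.factorial : ℝ) * (((m+1) - j).factorial : ℝ) * Real.Gamma ((n : ℝ) + 2 * s)) *
          hShift s (n + j)
      = ∑ j ∈ Finset.range (m + 2),
          ((∏ i ∈ Finset.range (m+1), (x + i)) / ((m+1).factorial : ℝ)) *
          ((-1 : ℝ) ^ j * (((m+1).choose j : ℕ) : ℝ) * hShift s (n + j)) := by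
        exact Finset.sum_congr rfl hterm
    _ = ((∏ i ∈ Finset.range (m+1), (x + i)) / ((m+1).factorial : ℝ)) *
          ∑ j ∈ Finset.range (m + 2),
          ((-1 : ℝ) ^ j * (((m+1).choose j : ℕ) : ℝ) * hShift s (n + j)) := by
        rw [Finset.mul_sum]
    _ = ((∏ i ∈ Finset.range (m+1), (x + i)) / ((m+1).factorial : ℝ)) *
          (-(m.factorial : ℝ) / ∏ i ∈ Finset.range (m + 1), ((n : ℝ) + 2 * s + i)) := by
        rw [key s hs m n]
    _ = -(1 / ((m+1 : ℕ) : ℝ)) := by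
        have hfac : ((m+1).factorial : ℝ) = ((m+1 : ℕ) : ℝ) * (m.factorial : ℝ) := by
          rw [Nat.factorial_succ]; push_cast; ring
        have : (∏ i ∈ Finset.range (m + 1), ((n : ℝ) + 2 * s + i)) = ∏ i ∈ Finset.range (m+1), (x + i) := rfl
        rw [this, hfac]
        have hm1 : ((m+1 : ℕ) : ℝ) ≠ 0 := by positivity
        have hmf : (m.factorial : ℝ) ≠ 0 := by positivity
        field_simp
end

section
/- For integers q ≥ p ≥ 0 and real ρ ∈ (0,1) [sufficient for convergence], with β = ρ/(1+ρ), Σ_{n=p}^∞ Σ_{m=0}^q [(−1)^{n−p}/((q−m)!(n−p)!)] · (q!·n!/(p!·m!)) · ρ^{n−m}/(n−m) · 1_{n>m} equals −Σ_{k=1}^∞ β^k/k = log(1−β) if p = q, and 0 if q > p. -/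
open Finset

lemma sum_rec1 (p q k : ℕ) :
    ∑ m ∈ range (q+2), (-1:ℝ)^m * (q+1).choose m * ((m+k).choose p)
      = ∑ m ∈ range (q+1), (-1:ℝ)^m * q.choose m * ((m+k).choose p)
        - ∑ m ∈ range (q+1), (-1:ℝ)^m * q.choose m * ((m+(k+1)).choose p) := by
  rw [Finset.sum_range_succ']
  have h1 : ∀ m, ((-1:ℝ))^(m+1) * (q+1).choose (m+1) * ((m+1+k).choose p)
      = -((-1:ℝ)^m * q.choose m * ((m+(k+1)).choose p))
        + (-1:ℝ)^(m+1) * q.choose (m+1) * ((m+1+k).choose p) := by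
    intro m
    have : (q+1).choose (m+1) = q.choose m + q.choose (m+1) := Nat.choose_succ_succ q m
    rw [this, show m + (k+1) = m+1+k by omega]
    push_cast
    ring
  rw [Finset.sum_congr rfl (fun m _ => h1 m), Finset.sum_add_distrib]
  have h2 : ∑ m ∈ range (q+1), (-1:ℝ)^(m+1) * q.choose (m+1) * ((m+1+k).choose p)
      = ∑ m ∈ range (q+2), (-1:ℝ)^m * q.choose m * ((m+k).choose p)
        - (-1:ℝ)^0 * q.choose 0 * ((0+k).choose p) := by
    rw [Finset.sum_range_succ' (fun m => (-1:ℝ)^m * q.choose m * ((m+k).choose p)) (q+1)]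
    ring
  rw [h2, Finset.sum_range_succ (fun m => (-1:ℝ)^m * q.choose m * ((m+k).choose p)) (q+1),
      Nat.choose_succ_self]
  simp only [Nat.choose_zero_right, Nat.cast_zero, Nat.cast_one,
    pow_zero, one_mul, mul_zero, zero_mul, mul_one, add_zero, Nat.cast_ofNat]
  rw [Finset.sum_neg_distrib]
  ring

lemma sum_rec2 (p q k : ℕ) :
    ∑ m ∈ range (q+1), (-1:ℝ)^m * q.choose m * ((m+(k+1)).choose (p+1))
      = ∑ m ∈ range (q+1), (-1:ℝ)^m * q.choose m * ((m+k).choose (p+1))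
        + ∑ m ∈ range (q+1), (-1:ℝ)^m * q.choose m * ((m+k).choose p) := by
  rw [← Finset.sum_add_distrib]
  refine Finset.sum_congr rfl (fun m _ => ?_)
  have : (m+(k+1)).choose (p+1) = (m+k).choose p + (m+k).choose (p+1) :=
    Nat.choose_succ_succ (m+k) p
  rw [show m+(k+1) = (m+k)+1 by omega, Nat.choose_succ_succ (m+k) p]
  push_cast
  ring

lemma Tlem (p : ℕ) : ∀ q k : ℕ, p ≤ q →
    ∑ m ∈ range (q+1), (-1:ℝ)^m * q.choose m * ((m+k).choose p)
      = if p = q then (-1:ℝ)^q else 0 := by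
  induction p with
  | zero =>
    intro q k _
    simp only [Nat.choose_zero_right, Nat.cast_one, mul_one]
    have h := Int.alternating_sum_range_choose (n := q)
    have h' := congrArg (fun z : ℤ => (z : ℝ)) h
    push_cast at h'
    rw [h']
    rcases eq_or_ne q 0 with rfl | hq
    · simp
    · simp [hq, (Ne.symm hq)]
  | succ p ih =>
    intro q k hq
    obtain ⟨q', rfl⟩ : ∃ q'', q = q''+1 := ⟨q-1, by omega⟩
    rw [show q'+1+1 = q'+2 from rfl] at *
    rw [sum_rec1 (p+1) q' k, sum_rec2 p q' k, ih q' k (by omega)]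
    rcases eq_or_ne p q' with rfl | hpq'
    · simp [pow_succ]
    · simp [hpq', fun h => hpq' (Nat.succ_injective h)]

lemma coeff_eq {p q j m : ℕ} (hm : m ≤ q) (x y : ℝ) :
    ((-1 : ℝ) ^ j / (((q - m).factorial : ℝ) * (j.factorial : ℝ))) *
        ((q.factorial : ℝ) * ((p + j).factorial : ℝ) /
          ((p.factorial : ℝ) * (m.factorial : ℝ))) * x / y
      = (-1:ℝ)^j * (((p+j).choose p : ℝ)) * ((q.choose m : ℝ)) * x / y := by
  have h1 : (q.choose m : ℝ) * (m.factorial : ℝ) * ((q-m).factorial : ℝ) = (q.factorial : ℝ) := by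
    exact_mod_cast congrArg (Nat.cast : ℕ → ℝ) (Nat.choose_mul_factorial_mul_factorial hm)
  have h2 : ((p+j).choose p : ℝ) * (p.factorial:ℝ) * (j.factorial:ℝ) = ((p+j).factorial : ℝ) := by
    have h := Nat.choose_mul_factorial_mul_factorial (Nat.le_add_right p j)
    rw [Nat.add_sub_cancel_left] at h
    exact_mod_cast congrArg (Nat.cast : ℕ → ℝ) h
  have key : ((-1 : ℝ) ^ j / (((q - m).factorial : ℝ) * (j.factorial : ℝ))) *
        ((q.factorial : ℝ) * ((p + j).factorial : ℝ) /
          ((p.factorial : ℝ) * (m.factorial : ℝ)))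
      = (-1:ℝ)^j * (((p+j).choose p : ℝ)) * ((q.choose m : ℝ)) := by
    have f1 : ((q-m).factorial : ℝ) ≠ 0 := Nat.cast_ne_zero.2 (Nat.factorial_ne_zero _)
    have f2 : ((j).factorial : ℝ) ≠ 0 := Nat.cast_ne_zero.2 (Nat.factorial_ne_zero _)
    have f3 : ((p).factorial : ℝ) ≠ 0 := Nat.cast_ne_zero.2 (Nat.factorial_ne_zero _)
    have f4 : ((m).factorial : ℝ) ≠ 0 := Nat.cast_ne_zero.2 (Nat.factorial_ne_zero _)
    field_simp
    rw [← h1, ← h2]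
    ring
  rw [key]

lemma summable_shift_choose (p a : ℕ) {ρ : ℝ} (h0 : 0 < ρ) (h1 : ρ < 1) :
    Summable (fun n : ℕ => (((n + a).choose p : ℝ)) * ρ ^ n) := by
  have hn : ‖ρ‖ < 1 := by rw [Real.norm_eq_abs, abs_of_pos h0]; exact h1
  have base : Summable (fun n : ℕ => ((n:ℝ))^p * ρ ^ n) :=
    summable_pow_mul_geometric_of_norm_lt_one p hn
  have s1 : Summable (fun n : ℕ => (((n).choose p : ℝ)) * ρ ^ n) := by
    refine base.of_nonneg_of_le (fun n => by positivity) (fun n => ?_)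
    have : ((n.choose p : ℝ)) ≤ (n:ℝ)^p := by exact_mod_cast Nat.choose_le_pow n p
    exact mul_le_mul_of_nonneg_right this (by positivity)
  have s2 : Summable (fun n : ℕ => (((n + a).choose p : ℝ)) * ρ ^ (n + a)) :=
    (summable_nat_add_iff a).2 s1
  have s3 := s2.mul_right ((ρ ^ a)⁻¹)
  refine s3.congr (fun n => ?_)
  have : ρ ^ (n + a) = ρ ^ n * ρ ^ a := pow_add ρ n a
  rw [this, mul_assoc, mul_assoc, mul_inv_cancel₀ (pow_ne_zero a (ne_of_gt h0)), mul_one]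

theorem stmt_7 (p q : ℕ) (hpq : p ≤ q) (ρ : ℝ) (hρ0 : 0 < ρ) (hρ1 : ρ < 1)
    (β : ℝ) (hβ : β = ρ / (1 + ρ)) :
    (∑' j : ℕ, ∑ m ∈ Finset.range (q + 1),
        (if m < p + j then
          ((-1 : ℝ) ^ j / (((q - m).factorial : ℝ) * (j.factorial : ℝ))) *
            ((q.factorial : ℝ) * ((p + j).factorial : ℝ) /
              ((p.factorial : ℝ) * (m.factorial : ℝ))) *
            ρ ^ (p + j - m) / ((p + j - m : ℕ) : ℝ)
        else 0))
      = if p = q then Real.log (1 - β) else 0 := by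
  subst hβ
  set Fp : ℕ → ℕ → ℝ := fun j m => if m < p + j then
      (-1:ℝ)^j * (((p+j).choose p : ℝ)) * ((q.choose m : ℝ)) * ρ^(p+j-m) / ((p+j-m : ℕ):ℝ)
    else 0 with hFp
  set B : ℕ → ℕ → ℝ := fun k m => if 1 ≤ k then
      (-1:ℝ)^(m+k+p) * (((m+k).choose p : ℝ)) * ((q.choose m : ℝ)) * ρ^k / (k:ℝ)
    else 0 with hB
  -- Step 1 : rewrite the summand using binomial coefficients
  have step1 : (∑' j : ℕ, ∑ m ∈ Finset.range (q + 1),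
        (if m < p + j then
          ((-1 : ℝ) ^ j / (((q - m).factorial : ℝ) * (j.factorial : ℝ))) *
            ((q.factorial : ℝ) * ((p + j).factorial : ℝ) /
              ((p.factorial : ℝ) * (m.factorial : ℝ))) *
            ρ ^ (p + j - m) / ((p + j - m : ℕ) : ℝ)
        else 0))
      = ∑' j : ℕ, ∑ m ∈ Finset.range (q + 1), Fp j m := by
    refine tsum_congr (fun j => Finset.sum_congr rfl (fun m hm => ?_))
    rw [Finset.mem_range] at hm
    by_cases h : m < p + j
    · simp only [hFp, h, if_true]
      exact coeff_eq (by omega) _ _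
    · simp [hFp, h]
  -- summability of the columns of Fp
  have sumFp : ∀ m, m ≤ q → Summable (fun j => Fp j m) := by
    intro m hm
    have base : Summable (fun j : ℕ => (((j + (p+q)).choose p : ℝ)) * ρ ^ j) :=
      summable_shift_choose p (p+q) hρ0 hρ1
    have maj0 : Summable (fun j : ℕ => (((p+j).choose p : ℝ)) * ρ ^ (j - q)) := by
      refine (summable_nat_add_iff q).1 (base.congr (fun n => ?_))
      have e1 : n + (p+q) = p + (n + q) := by omega
      have e2 : n + q - q = n := by omega
      rw [e1, e2]
    have maj : Summable (fun j : ℕ => ((q.choose m : ℝ)) * ((((p+j).choose p : ℝ)) * ρ ^ (j - q))) :=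
      maj0.mul_left _
    refine Summable.of_norm_bounded maj (fun j => ?_)
    by_cases h : m < p + j
    · simp only [hFp, h, if_true]
      have habs : ‖(-1:ℝ)^j * (((p+j).choose p : ℝ)) * ((q.choose m : ℝ)) * ρ^(p+j-m) / ((p+j-m : ℕ):ℝ)‖
          = (((p+j).choose p : ℝ)) * ((q.choose m : ℝ)) * ρ^(p+j-m) / ((p+j-m : ℕ):ℝ) := by
        rw [Real.norm_eq_abs, abs_div, abs_mul, abs_mul, abs_mul, abs_pow, abs_neg, abs_one,
          one_pow, one_mul]
        rw [abs_of_nonneg (by positivity), abs_of_nonneg (by positivity),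
          abs_of_nonneg (by positivity), abs_of_nonneg (by positivity)]
      rw [habs]
      have hb1 : (((p+j).choose p : ℝ)) * ((q.choose m : ℝ)) * ρ^(p+j-m) / ((p+j-m : ℕ):ℝ)
          ≤ (((p+j).choose p : ℝ)) * ((q.choose m : ℝ)) * ρ^(p+j-m) := by
        apply div_le_self (by positivity)
        exact_mod_cast (by omega : 1 ≤ p + j - m)
      refine hb1.trans ?_
      have hb2 : ρ^(p+j-m) ≤ ρ^(j-q) :=
        pow_le_pow_of_le_one hρ0.le hρ1.le (by omega)
      have hb3 : (((p+j).choose p : ℝ)) * ((q.choose m : ℝ)) * ρ^(p+j-m)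
          ≤ (((p+j).choose p : ℝ)) * ((q.choose m : ℝ)) * ρ^(j-q) :=
        mul_le_mul_of_nonneg_left hb2 (by positivity)
      refine hb3.trans (le_of_eq ?_)
      ring
    · simp only [hFp, h, if_false]
      rw [norm_zero]
      positivity
  -- summability of the columns of B
  have sumB : ∀ m, m ≤ q → Summable (fun k => B k m) := by
    intro m hm
    have maj : Summable (fun k : ℕ => ((q.choose m : ℝ)) * ((((k+m).choose p : ℝ)) * ρ ^ k)) :=
      (summable_shift_choose p m hρ0 hρ1).mul_left _
    refine Summable.of_norm_bounded maj (fun k => ?_)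
    by_cases h : 1 ≤ k
    · simp only [hB, h, if_true]
      have habs : ‖(-1:ℝ)^(m+k+p) * (((m+k).choose p : ℝ)) * ((q.choose m : ℝ)) * ρ^k / (k:ℝ)‖
          = (((m+k).choose p : ℝ)) * ((q.choose m : ℝ)) * ρ^k / (k:ℝ) := by
        rw [Real.norm_eq_abs, abs_div, abs_mul, abs_mul, abs_mul, abs_pow, abs_neg, abs_one,
          one_pow, one_mul]
        rw [abs_of_nonneg (by positivity), abs_of_nonneg (by positivity),
          abs_of_nonneg (by positivity), abs_of_nonneg (by positivity)]
      rw [habs]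
      have hb1 : (((m+k).choose p : ℝ)) * ((q.choose m : ℝ)) * ρ^k / (k:ℝ)
          ≤ (((m+k).choose p : ℝ)) * ((q.choose m : ℝ)) * ρ^k := by
        apply div_le_self (by positivity)
        exact_mod_cast h
      refine hb1.trans (le_of_eq ?_)
      rw [show m + k = k + m by omega]
      ring
    · simp only [hB, h, if_false]
      rw [norm_zero]
      positivity
  -- Step 3 : reindex each column sum
  have hsup : ∀ m k : ℕ, B k m ≠ 0 → 1 ≤ k ∧ p ≤ m + k := by
    intro m k hk
    constructor
    · by_contra h; simp [hB, h] at hk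
    · by_contra h
      have h0 : (m+k).choose p = 0 := Nat.choose_eq_zero_of_lt (by omega)
      simp [hB, h0] at hk
  have step3 : ∀ m, m ≤ q → ∑' j, Fp j m = ∑' k, B k m := by
    intro m hm
    refine tsum_eq_tsum_of_ne_zero_bij (fun x => m + x.1 - p) ?_ ?_ ?_
    · intro x y hxy
      have hxy' : m + x.1 - p = m + y.1 - p := hxy
      have hx := (hsup m x.1 x.2).2
      have hy := (hsup m y.1 y.2).2
      exact Subtype.ext (by omega)
    · intro j hj
      have hmlt : m < p + j := by
        by_contra h; simp [hFp, h] at hj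
      have hBne : B (p+j-m) m ≠ 0 := by
        have h1 : 1 ≤ p + j - m := by omega
        simp only [hB, h1, if_true]
        apply div_ne_zero
        apply mul_ne_zero
        apply mul_ne_zero
        apply mul_ne_zero
        · exact pow_ne_zero _ (by norm_num)
        · exact_mod_cast (Nat.choose_pos (by omega : p ≤ m + (p+j-m))).ne'
        · exact_mod_cast (Nat.choose_pos hm).ne'
        · exact pow_ne_zero _ (ne_of_gt hρ0)
        · exact_mod_cast (by omega : p + j - m ≠ 0)
      exact ⟨⟨p+j-m, hBne⟩, by simp only; omega⟩
    · rintro ⟨k, hk⟩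
      obtain ⟨hk1, hkp⟩ := hsup m k hk
      show Fp (m + k - p) m = B k m
      have hcond : m < p + (m + k - p) := by omega
      have hj : p + (m + k - p) = m + k := by omega
      simp only [hFp, hB, hcond, if_true, hk1]
      rw [hj, show m + k - m = k by omega]
      have hsign : ((-1:ℝ))^(m+k-p) = (-1)^(m+k+p) := by
        rw [show m+k+p = (m+k-p) + 2*p by omega, pow_add, pow_mul]
        norm_num
      rw [hsign]
  -- put everything together
  rw [step1, Summable.tsum_finsetSum (fun m hm => sumFp m (by rw [Finset.mem_range] at hm; omega))]
  rw [Finset.sum_congr rfl (fun m hm => step3 m (by rw [Finset.mem_range] at hm; omega))]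
  rw [← Summable.tsum_finsetSum (fun m hm => sumB m (by rw [Finset.mem_range] at hm; omega))]
  -- Step 5 : evaluate the inner finite sums
  have step5 : ∀ k, ∑ m ∈ Finset.range (q+1), B k m
      = (if 1 ≤ k then ((-1:ℝ)^(k+p) * ρ^k / (k:ℝ)) * (if p = q then (-1:ℝ)^q else 0) else 0) := by
    intro k
    by_cases h : 1 ≤ k
    · simp only [hB, h, if_true]
      rw [← Tlem p q k hpq, Finset.mul_sum]
      refine Finset.sum_congr rfl (fun m _ => ?_)
      have hsign : ((-1:ℝ))^(m+k+p) = (-1)^m * (-1)^(k+p) := by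
        rw [show m+k+p = m+(k+p) by omega, pow_add]
      rw [hsign]
      ring
    · simp [hB, h]
  rw [tsum_congr step5]
  -- Step 6 : final evaluation
  rcases eq_or_ne p q with rfl | hne
  · have hc : ∀ k : ℕ, (if 1 ≤ k then ((-1:ℝ)^(k+p) * ρ^k / (k:ℝ)) * (if p = p then (-1:ℝ)^p else 0) else 0)
        = (-ρ)^k / (k:ℝ) := by
      intro k
      rw [if_pos rfl]
      rcases Nat.eq_zero_or_pos k with rfl | hk
      · simp
      · have hk' : 1 ≤ k := hk
        rw [if_pos hk']
        rw [show (-ρ)^k = (-1:ℝ)^k * ρ^k by rw [neg_pow]]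
        rw [show ((-1:ℝ)^(k+p) * ρ^k / (k:ℝ)) * ((-1:ℝ)^p) = (-1:ℝ)^(k+p+p) * ρ^k / (k:ℝ) by
          ring]
        rw [show k+p+p = k + 2*p by omega, pow_add ((-1:ℝ)) k (2*p), pow_mul]
        norm_num
    rw [tsum_congr hc]
    have h1 : HasSum (fun n : ℕ => (-ρ)^(n+1)/(((n:ℕ)+1 : ℕ):ℝ)) (-Real.log (1 - (-ρ))) := by
      have := Real.hasSum_pow_div_log_of_abs_lt_one (x := -ρ)
        (by rw [abs_neg, abs_of_pos hρ0]; exact hρ1)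
      convert this using 2 with n
      push_cast
      ring
    have h2 : HasSum (fun k : ℕ => (-ρ)^k/(k:ℝ)) (-Real.log (1+ρ)) := by
      have h1' : HasSum (fun n : ℕ => (fun k : ℕ => (-ρ)^k/(k:ℝ)) (n + 1)) (-Real.log (1 - (-ρ))) := by
        exact h1
      have := (hasSum_nat_add_iff (f := fun k : ℕ => (-ρ)^k/(k:ℝ)) 1).1 h1'
      simp only [Finset.range_one, Finset.sum_singleton, Nat.cast_zero, pow_zero, div_zero,
        add_zero, sub_neg_eq_add] at this
      exact this
    rw [h2.tsum_eq, if_pos rfl]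
    have hlog : (1:ℝ) - ρ/(1+ρ) = (1+ρ)⁻¹ := by
      have : (1:ℝ)+ρ ≠ 0 := by linarith
      field_simp
      ring
    rw [hlog, Real.log_inv]
  · simp [hne]
end

section
/- Let N ≥ 1 be an integer, s > 0 real, and (m_1,…,m_N) nonnegative integers with |m| = Σ m_i ≥ 1. Then |m|·(2sN − 1 + |m|) = Σ_{p=1}^N m_p · (m_p − 1 + 2s(N−p+1) + 2·Σ_{j=p+1}^N m_j) · Π_{i=1}^{p−1} [(1 − 2s(N−i+1) − Σ_{j=i+1}^N m_j)/(1 − 2s(N−i) − Σ_{j=i+1}^N m_j)], assuming all the denominators 1 − 2s(N−i) − Σ_{j=i+1}^N m_j are nonzero. -/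
open Finset

theorem stmt_9 (N : ℕ) (hN : 1 ≤ N) (s : ℝ) (hs : 0 < s) (m : ℕ → ℕ)
    (M : ℕ) (hM : M = ∑ i ∈ Finset.Icc 1 N, m i) (hM1 : 1 ≤ M)
    (hden : ∀ i ∈ Finset.Icc 1 (N - 1),
      (1 : ℝ) - 2 * s * ((N : ℝ) - (i : ℝ)) - ∑ j ∈ Finset.Icc (i + 1) N, (m j : ℝ) ≠ 0) :
    (M : ℝ) * (2 * s * (N : ℝ) - 1 + (M : ℝ))
      = ∑ p ∈ Finset.Icc 1 N,
          (m p : ℝ) *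
            ((m p : ℝ) - 1 + 2 * s * ((N : ℝ) - (p : ℝ) + 1) +
              2 * ∑ j ∈ Finset.Icc (p + 1) N, (m j : ℝ)) *
            ∏ i ∈ Finset.Icc 1 (p - 1),
              ((1 - 2 * s * ((N : ℝ) - (i : ℝ) + 1) - ∑ j ∈ Finset.Icc (i + 1) N, (m j : ℝ)) /
                (1 - 2 * s * ((N : ℝ) - (i : ℝ)) - ∑ j ∈ Finset.Icc (i + 1) N, (m j : ℝ))) := by
  classical
  -- abbreviations
  set S : ℕ → ℝ := fun p => ∑ j ∈ Finset.Icc (p + 1) N, (m j : ℝ) with hS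
  set D : ℕ → ℝ := fun p => 1 - 2 * s * ((N : ℝ) - (p : ℝ)) - S p with hD
  set Q : ℕ → ℝ := fun p => ∏ i ∈ Finset.Icc 1 p,
      ((1 - 2 * s * ((N : ℝ) - (i : ℝ) + 1) - S i) / D i) with hQ
  set F : ℕ → ℝ := fun p => -(S p) * D p * Q p with hF
  clear_value S D Q F
  have hSN : S N = 0 := by
    simp [hS, Finset.Icc_eq_empty_of_lt (Nat.lt_succ_self N)]
  have hSrec : ∀ k, k < N → S k = (m (k + 1) : ℝ) + S (k + 1) := by
    intro k hk
    simp only [hS]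
    rw [Finset.Icc_eq_cons_Ioc (by omega : k + 1 ≤ N), Finset.sum_cons, ← Finset.Icc_add_one_left_eq_Ioc]
  have hQrec : ∀ k, Q (k + 1) =
      Q k * ((1 - 2 * s * ((N : ℝ) - ((k + 1 : ℕ) : ℝ) + 1) - S (k + 1)) / D (k + 1)) := by
    intro k
    simp only [hQ]
    rw [Finset.prod_Icc_succ_top (by omega : 1 ≤ k + 1)]
  -- key telescoping identity
  have key : ∀ k, k < N →
      (m (k + 1) : ℝ) *
        ((m (k + 1) : ℝ) - 1 + 2 * s * ((N : ℝ) - ((k + 1 : ℕ) : ℝ) + 1) + 2 * S (k + 1)) *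
        Q k = F k - F (k + 1) := by
    intro k hk
    have hm : (m (k + 1) : ℝ) = S k - S (k + 1) := by
      have := hSrec k hk; linarith
    have hDk1 : D (k + 1) = D k + 2 * s + (S k - S (k + 1)) := by
      simp only [hD]; push_cast; ring
    rcases eq_or_lt_of_le (Nat.succ_le_of_lt hk) with hNeq | hlt
    · -- k + 1 = N : last term, F (k+1) = 0
      have hNeq' : k + 1 = N := hNeq
      have hb : S (k + 1) = 0 := by rw [hNeq']; exact hSN
      have hFk1 : F (k + 1) = 0 := by simp only [hF]; rw [hb]; ring
      have hSk : S k = (m (k + 1) : ℝ) := by rw [hSrec k hk, hb, add_zero]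
      have hk1' : ((k + 1 : ℕ) : ℝ) = (N : ℝ) := by exact_mod_cast congrArg (Nat.cast : ℕ → ℝ) hNeq'
      have hk' : (k : ℝ) = (N : ℝ) - 1 := by push_cast at hk1'; linarith
      rw [hFk1, sub_zero]
      simp only [hF, hD]
      rw [hb, hSk, hk1', hk']
      ring
    · -- k + 1 < N : use nonvanishing denominator
      have hne : D (k + 1) ≠ 0 := by
        have hmem : k + 1 ∈ Finset.Icc 1 (N - 1) := by
          rw [Finset.mem_Icc]; omega
        have := hden (k + 1) hmem
        simp only [hD, hS]
        exact this
      simp only [hF]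
      rw [hQrec k]
      have hnum : 1 - 2 * s * ((N : ℝ) - ((k + 1 : ℕ) : ℝ) + 1) - S (k + 1)
          = D (k + 1) - 2 * s := by
        simp only [hD]; ring
      rw [hnum]
      have hcancel : (D (k + 1) - 2 * s) / D (k + 1) * D (k + 1) = D (k + 1) - 2 * s :=
        div_mul_cancel₀ _ hne
      have h2s : 2 * s * ((N : ℝ) - ((k + 1 : ℕ) : ℝ) + 1) = 1 - S k - D k := by
        simp only [hD]; push_cast; ring
      rw [hm, h2s]
      linear_combination (-(S (k + 1)) * Q k) * hcancel + (-(S (k + 1)) * Q k) * hDk1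
  -- telescoping
  have tele : ∑ p ∈ Finset.Icc 1 N, (F (p - 1) - F p) = F 0 - F N := by
    rw [← Finset.Ico_add_one_right_eq_Icc, Finset.sum_Ico_eq_sum_range]
    simp only [Nat.add_sub_cancel, Nat.succ_sub_one]
    have h := Finset.sum_range_sub' F N
    convert h using 2 with i
    congr 1 <;> congr 1 <;> omega
  have main : ∑ p ∈ Finset.Icc 1 N,
      (m p : ℝ) *
        ((m p : ℝ) - 1 + 2 * s * ((N : ℝ) - (p : ℝ) + 1) +
          2 * ∑ j ∈ Finset.Icc (p + 1) N, (m j : ℝ)) *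
        ∏ i ∈ Finset.Icc 1 (p - 1),
          ((1 - 2 * s * ((N : ℝ) - (i : ℝ) + 1) - ∑ j ∈ Finset.Icc (i + 1) N, (m j : ℝ)) /
            (1 - 2 * s * ((N : ℝ) - (i : ℝ)) - ∑ j ∈ Finset.Icc (i + 1) N, (m j : ℝ)))
      = F 0 - F N := by
    rw [← tele]
    apply Finset.sum_congr rfl
    intro p hp
    rw [Finset.mem_Icc] at hp
    obtain ⟨hp1, hp2⟩ := hp
    obtain ⟨k, rfl⟩ := Nat.exists_eq_add_of_le hp1
    have hk : k < N := by omega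
    rw [Nat.add_comm 1 k] at *
    simpa [hS, hD, hQ, Nat.add_sub_cancel] using (key k hk)
  rw [main]
  have hFN : F N = 0 := by simp only [hF]; rw [hSN]; ring
  have hS0 : S 0 = (M : ℝ) := by
    simp only [hS, hM, zero_add]
    push_cast
    rfl
  have hQ0 : Q 0 = 1 := by simp [hQ]
  have hD0 : D 0 = 1 - 2 * s * (N : ℝ) - (M : ℝ) := by
    simp only [hD, hS0]
    norm_num
  rw [hFN, sub_zero]
  simp only [hF]
  rw [hS0, hQ0, hD0]
  ring
end

section
/- Let s > 0, N ≥ 3 be an integer, and w_3, …, w_{N−1} nonzero real numbers. Define f_k = 2s(2s(N−k+1) − 1). Then f_3 = Σ_{k=3}^{N−1} [4s²(w_k + 2s(N−k) − 1)/w_k] · Π_{j=3}^{k−1} (w_j − 2s)/w_j + f_N · Π_{j=3}^{N−1} (w_j − 2s)/w_j. -/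
open Finset

lemma tele_sum (g : ℕ → ℝ) (a : ℕ) : ∀ b, a ≤ b →
    ∑ k ∈ Finset.Ico a b, (g k - g (k + 1)) = g a - g b := by
  intro b
  induction b with
  | zero => intro h; simp [Nat.le_zero.mp h]
  | succ n ih =>
    intro h
    rcases Nat.lt_or_ge a (n + 1) with h' | h'
    · have ha : a ≤ n := by omega
      rw [Finset.sum_Ico_succ_top ha, ih ha]
      ring
    · have : a = n + 1 := by omega
      simp [this]

theorem stmt_10 (s : ℝ) (hs : 0 < s) (N : ℕ) (hN : 3 ≤ N) (w : ℕ → ℝ)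
    (hw : ∀ j ∈ Finset.Icc 3 (N - 1), w j ≠ 0)
    (f : ℕ → ℝ) (hf : ∀ k, f k = 2 * s * (2 * s * ((N : ℝ) - (k : ℝ) + 1) - 1)) :
    f 3 = (∑ k ∈ Finset.Icc 3 (N - 1),
        (4 * s ^ 2 * (w k + 2 * s * ((N : ℝ) - (k : ℝ)) - 1) / w k) *
          ∏ j ∈ Finset.Icc 3 (k - 1), (w j - 2 * s) / w j)
      + f N * ∏ j ∈ Finset.Icc 3 (N - 1), (w j - 2 * s) / w j := by
  set g : ℕ → ℝ := fun k => f k * ∏ j ∈ Finset.Ico 3 k, (w j - 2 * s) / w j with hg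
  have hIccN : Finset.Icc 3 (N - 1) = Finset.Ico 3 N := by
    rw [← Finset.Ico_add_one_right_eq_Icc]
    congr 1
    omega
  have key : ∀ k ∈ Finset.Icc 3 (N - 1),
      (4 * s ^ 2 * (w k + 2 * s * ((N : ℝ) - (k : ℝ)) - 1) / w k) *
        ∏ j ∈ Finset.Icc 3 (k - 1), (w j - 2 * s) / w j = g k - g (k + 1) := by
    intro k hk
    obtain ⟨hk3, hkN⟩ := Finset.mem_Icc.mp hk
    have hwk := hw k hk
    have hIcck : Finset.Icc 3 (k - 1) = Finset.Ico 3 k := by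
      rw [← Finset.Ico_add_one_right_eq_Icc]
      congr 1
      omega
    have hprod : ∏ j ∈ Finset.Ico 3 (k + 1), (w j - 2 * s) / w j
        = (∏ j ∈ Finset.Ico 3 k, (w j - 2 * s) / w j) * ((w k - 2 * s) / w k) := by
      rw [Finset.prod_Ico_succ_top hk3]
    rw [hIcck]
    simp only [hg, hprod, hf k, hf (k + 1)]
    push_cast
    set P := ∏ j ∈ Finset.Ico 3 k, (w j - 2 * s) / w j
    field_simp
    ring
  rw [Finset.sum_congr rfl key, hIccN, tele_sum g 3 N (by omega)]
  simp only [hg]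
  rw [show Finset.Ico 3 3 = (∅ : Finset ℕ) by simp]
  simp
end

section
/- Let s > 0, N ≥ 1, and let ξ ∈ ℕ^N with |ξ| = Σ ξ_i ≥ 0. Fix u ∈ (0,1). For 0 ≤ n ≤ |ξ|, let x_1 ≤ … ≤ x_{|ξ|} ≤ N be the positions corresponding to ξ, and define g_N(n) = Σ_{1 ≤ i_1 < … < i_n ≤ |ξ|} Π_{α=1}^n [(n − α + 2s(N + 1 − (x_{i_α} + ⌊uN⌋)))/(n − α + 2s(N+1))], the value obtained after translating all positions by ⌊uN⌋. Then g_N(n) → C(|ξ|, n)·(1−u)^n as N → ∞. -/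
open Finset Filter

lemma aux13 (s a b u : ℝ) (hs : 0 < s) (hu : 0 ≤ u) :
    Tendsto (fun N : ℕ => (a + 2*s*((N:ℝ)+1 - (b + (Nat.floor (u*N) : ℝ)))) /
      (a + 2*s*((N:ℝ)+1))) atTop (nhds (1-u)) := by
  have h0 : Tendsto (fun N : ℕ => (1:ℝ)/N) atTop (nhds 0) :=
    tendsto_one_div_atTop_nhds_zero_nat
  have hfloor : Tendsto (fun N : ℕ => (Nat.floor (u*(N:ℝ)) : ℝ)/(N:ℝ)) atTop (nhds u) :=
    (tendsto_nat_floor_mul_div_atTop hu).comp tendsto_natCast_atTop_atTop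
  have hnum : Tendsto (fun N : ℕ => a*(1/N) + 2*s*(1 + 1/N - b*(1/N) - (Nat.floor (u*N):ℝ)/N))
      atTop (nhds (2*s*(1-u))) := by
    have := ((tendsto_const_nhds (x := a)).mul h0).add
      ((tendsto_const_nhds (x := 2*s)).mul
        ((((tendsto_const_nhds (x := (1:ℝ))).add h0).sub ((tendsto_const_nhds (x := b)).mul h0)).sub hfloor))
    simpa using this
  have hden : Tendsto (fun N : ℕ => a*(1/N) + 2*s*(1 + 1/N))
      atTop (nhds (2*s)) := by
    have := ((tendsto_const_nhds (x := a)).mul h0).add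
      ((tendsto_const_nhds (x := 2*s)).mul ((tendsto_const_nhds (x := (1:ℝ))).add h0))
    simpa using this
  have hlim := hnum.div hden (by positivity)
  have hval : 2*s*(1-u) / (2*s) = 1 - u := by field_simp
  rw [hval] at hlim
  refine hlim.congr' ?_
  filter_upwards [eventually_ge_atTop 1] with N hN
  have hN0 : (N:ℝ) ≠ 0 := by positivity
  simp only [Pi.div_apply]
  rw [← mul_div_mul_left _ _ hN0]
  have h1 : (N:ℝ) * (1 / N) = 1 := by field_simp
  have h2 : (N:ℝ) * ((Nat.floor (u*N) : ℝ) / N) = (Nat.floor (u*N) : ℝ) := by field_simp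
  congr 1
  · linear_combination (a + 2*s - 2*s*b) * h1 - 2*s*h2
  · linear_combination (a + 2*s) * h1

theorem stmt_13 (s : ℝ) (hs : 0 < s) (u : ℝ) (hu0 : 0 < u) (hu1 : u < 1)
    (M : ℕ) (x : ℕ → ℕ) (hx : ∀ i ∈ Finset.Icc 1 M, 1 ≤ x i)
    (hmono : ∀ i ∈ Finset.Icc 1 M, ∀ j ∈ Finset.Icc 1 M, i ≤ j → x i ≤ x j)
    (n : ℕ) (hn : n ≤ M) :
    Tendsto (fun N : ℕ =>
        ∑ T ∈ (Finset.Icc 1 M).powersetCard n,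
          ∏ α ∈ Finset.range n,
            ((n : ℝ) - ((α : ℝ) + 1) +
                2 * s * ((N : ℝ) + 1 -
                  ((x ((T.sort (· ≤ ·)).getD α 0) : ℝ) + (Nat.floor (u * N) : ℝ)))) /
              ((n : ℝ) - ((α : ℝ) + 1) + 2 * s * ((N : ℝ) + 1)))
      atTop (nhds ((M.choose n : ℝ) * (1 - u) ^ n)) := by
  have hcard : ((Finset.Icc 1 M).powersetCard n).card = M.choose n := by
    rw [Finset.card_powersetCard, Nat.card_Icc]
    simp
  have hval : (M.choose n : ℝ) * (1 - u) ^ n =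
      ∑ T ∈ (Finset.Icc 1 M).powersetCard n, ∏ _α ∈ Finset.range n, (1 - u) := by
    simp [Finset.prod_const, Finset.sum_const, hcard, mul_comm]
  rw [hval]
  refine tendsto_finset_sum _ fun T hT => tendsto_finset_prod _ fun α hα => ?_
  exact aux13 s ((n : ℝ) - ((α : ℝ) + 1)) ((x ((T.sort (· ≤ ·)).getD α 0) : ℝ)) u hs hu0.le
end
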